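/- arXiv:2601.08195 — 7 statements merged into one kernel-verified Lean document; each statement's English description precedes it below -/
import Mathlib

section
/- Let n > 0 and â > 0 be real numbers, and set θ = (n(n+â))^{1/4} and k = (n/(n+â))^{1/4}. Define the 2×2 real matrices B = [[1,0],[0,−1]], C = [[cosh θ, k·sinh θ],[−(1/k)·sinh θ, −cosh θ]], and P = [[√k·cosh(θ/2), −√k·sinh(θ/2)],[−(1/√k)·sinh(θ/2), (1/√k)·cosh(θ/2)]]. Then det P = 1 (in particular P is invertible) and P·B·P⁻¹ = C. (Thus the holonomy matrix C(n) along the ℤ₂ gradient flow line is conjugate to the regular representation matrix B for every n, with explicit change-of-basis matrix P(n).) -/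
open Matrix

lemma holonomy_aux (r c s K : ℝ) (hr : r ≠ 0) (hid : c ^ 2 - s ^ 2 = 1) (hK : K = r * r) :
    (!![r * c, -r * s; -(1/r) * s, (1/r) * c] : Matrix (Fin 2) (Fin 2) ℝ) * !![1, 0; 0, -1]
      = !![c ^ 2 + s ^ 2, K * (2 * s * c); -(1 / K) * (2 * s * c), -(c ^ 2 + s ^ 2)]
        * !![r * c, -r * s; -(1/r) * s, (1/r) * c] := by
  subst hK
  ext i j
  fin_cases i <;> fin_cases j <;>
    simp [Matrix.mul_apply, Fin.sum_univ_two] <;>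
    field_simp <;>
    first
      | linear_combination (-(r ^ 2 * c)) * hid
      | linear_combination (-(r ^ 2 * s)) * hid
      | linear_combination (r ^ 3 * s) * hid
      | linear_combination (r ^ 3 * c) * hid
      | linear_combination (-c) * hid
      | linear_combination (-s) * hid
      | linear_combination s * hid
      | linear_combination c * hid

/-- For `n, â > 0`, with `θ = (n(n+â))^{1/4}` and `k = (n/(n+â))^{1/4}`, the explicit
change-of-basis matrix `P` has determinant 1 and conjugates the regular representation
matrix `B = diag(1,−1)` into the holonomy matrix `C`. -/
theorem holonomy_conjugate_Z2 (n a : ℝ) (hn : 0 < n) (ha : 0 < a) :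
    let θ : ℝ := (n * (n + a)) ^ ((1 : ℝ) / 4)
    let k : ℝ := (n / (n + a)) ^ ((1 : ℝ) / 4)
    let B : Matrix (Fin 2) (Fin 2) ℝ := !![1, 0; 0, -1]
    let C : Matrix (Fin 2) (Fin 2) ℝ :=
      !![Real.cosh θ, k * Real.sinh θ; -(1 / k) * Real.sinh θ, -Real.cosh θ]
    let P : Matrix (Fin 2) (Fin 2) ℝ :=
      !![Real.sqrt k * Real.cosh (θ / 2), -Real.sqrt k * Real.sinh (θ / 2);
         -(1 / Real.sqrt k) * Real.sinh (θ / 2), (1 / Real.sqrt k) * Real.cosh (θ / 2)]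
    P.det = 1 ∧ P * B * P⁻¹ = C := by
  intro θ k B C P
  have hk : 0 < k := Real.rpow_pos_of_pos (div_pos hn (by linarith)) _
  have hs : 0 < Real.sqrt k := Real.sqrt_pos.mpr hk
  have hss : Real.sqrt k * Real.sqrt k = k := Real.mul_self_sqrt hk.le
  have hid : Real.cosh (θ/2) ^ 2 - Real.sinh (θ/2) ^ 2 = 1 := Real.cosh_sq_sub_sinh_sq _
  have hdet : P.det = 1 := by
    show (!![Real.sqrt k * Real.cosh (θ / 2), -Real.sqrt k * Real.sinh (θ / 2);
         -(1 / Real.sqrt k) * Real.sinh (θ / 2), (1 / Real.sqrt k) * Real.cosh (θ / 2)]).det = 1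
    rw [Matrix.det_fin_two_of]
    field_simp
    linear_combination hid
  refine ⟨hdet, ?_⟩
  have hP : Invertible P := P.invertibleOfIsUnitDet (by rw [hdet]; exact isUnit_one)
  rw [Matrix.mul_inv_eq_iff_eq_mul_of_invertible]
  have hcθ : Real.cosh θ = Real.cosh (θ/2) ^ 2 + Real.sinh (θ/2) ^ 2 := by
    have h2 : θ = θ/2 + θ/2 := by ring
    rw [h2, Real.cosh_add]; ring
  have hsθ : Real.sinh θ = 2 * Real.sinh (θ/2) * Real.cosh (θ/2) := by
    have h2 : θ = θ/2 + θ/2 := by ring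
    rw [h2, Real.sinh_add]; ring
  have hC : C = !![Real.cosh (θ/2) ^ 2 + Real.sinh (θ/2) ^ 2,
      k * (2 * Real.sinh (θ/2) * Real.cosh (θ/2));
      -(1 / k) * (2 * Real.sinh (θ/2) * Real.cosh (θ/2)),
      -(Real.cosh (θ/2) ^ 2 + Real.sinh (θ/2) ^ 2)] := by
    show (!![Real.cosh θ, k * Real.sinh θ; -(1 / k) * Real.sinh θ, -Real.cosh θ]) = _
    rw [hcθ, hsθ]
  rw [hC]
  exact holonomy_aux (Real.sqrt k) (Real.cosh (θ/2)) (Real.sinh (θ/2)) k hs.ne' hid hss.symm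
end

section
/- Let a ∈ ℝ with a ≠ 0 and let C₀ > 0. Define S : ℝ → ℝ by S(t) = (−a² + √(a⁴ + 4C₀e^{8t}))/2. Then S(t) > 0 for all t, S satisfies the gradient-flow ODE S′(t) = 8·S(t)·(S(t)+a²)/(2·S(t)+a²) for all t, S(t) → 0 as t → −∞, and S(t) → ∞ as t → ∞. Equivalently, S(t)·(S(t)+a²) = C₀·e^{8t} for all t. -/
open Filter

/-- The explicit solution `S(t) = (−a² + √(a⁴ + 4C₀e^{8t}))/2` of the reduced gradient-flow
equation of the A₁ ALE space: it is positive, satisfies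
`S′ = 8·S·(S+a²)/(2S+a²)`, tends to 0 at −∞ and to ∞ at +∞, and satisfies
`S·(S+a²) = C₀·e^{8t}`. -/
theorem reduced_gradient_flow_solution_Z2 (a C₀ : ℝ) (ha : a ≠ 0) (hC : 0 < C₀) :
    let S : ℝ → ℝ := fun t => (-a ^ 2 + Real.sqrt (a ^ 4 + 4 * C₀ * Real.exp (8 * t))) / 2
    (∀ t, 0 < S t) ∧
    (∀ t, HasDerivAt S (8 * S t * (S t + a ^ 2) / (2 * S t + a ^ 2)) t) ∧
    Tendsto S atBot (nhds 0) ∧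
    Tendsto S atTop atTop ∧
    (∀ t, S t * (S t + a ^ 2) = C₀ * Real.exp (8 * t)) := by
  intro S
  have ha2 : 0 < a ^ 2 := by positivity
  have ha4 : a ^ 4 = (a ^ 2) ^ 2 := by ring
  have hD : ∀ t, (0:ℝ) < a ^ 4 + 4 * C₀ * Real.exp (8 * t) := by
    intro t; have := Real.exp_pos (8 * t); positivity
  have hsq : ∀ t, a ^ 2 < Real.sqrt (a ^ 4 + 4 * C₀ * Real.exp (8 * t)) := by
    intro t
    have h1 : Real.sqrt (a ^ 4) = a ^ 2 := by
      rw [ha4, Real.sqrt_sq ha2.le]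
    calc a ^ 2 = Real.sqrt (a ^ 4) := h1.symm
      _ < _ := by
        apply Real.sqrt_lt_sqrt (by positivity)
        nlinarith [Real.exp_pos (8 * t)]
  have hpos : ∀ t, 0 < S t := by
    intro t; have := hsq t; simp only [S]; linarith
  have hsq2 : ∀ t, (Real.sqrt (a ^ 4 + 4 * C₀ * Real.exp (8 * t))) ^ 2
      = a ^ 4 + 4 * C₀ * Real.exp (8 * t) := fun t => Real.sq_sqrt (hD t).le
  have hkey : ∀ t, S t * (S t + a ^ 2) = C₀ * Real.exp (8 * t) := by
    intro t
    simp only [S]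
    have := hsq2 t
    nlinarith [this]
  refine ⟨hpos, ?_, ?_, ?_, hkey⟩
  · intro t
    set D : ℝ := a ^ 4 + 4 * C₀ * Real.exp (8 * t) with hDdef
    have hDt : 0 < D := hD t
    have hsne : Real.sqrt D ≠ 0 := by positivity
    have hf : HasDerivAt (fun t => a ^ 4 + 4 * C₀ * Real.exp (8 * t))
        (4 * C₀ * (Real.exp (8 * t) * 8)) t := by
      have := ((hasDerivAt_id t).const_mul (8:ℝ)).exp
      simpa using (this.const_mul (4 * C₀)).const_add (a ^ 4)
    have hs : HasDerivAt (fun t => Real.sqrt (a ^ 4 + 4 * C₀ * Real.exp (8 * t)))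
        (1 / (2 * Real.sqrt D) * (4 * C₀ * (Real.exp (8 * t) * 8))) t := by
      exact (Real.hasDerivAt_sqrt hDt.ne').comp t hf
    have hS : HasDerivAt S
        ((1 / (2 * Real.sqrt D) * (4 * C₀ * (Real.exp (8 * t) * 8))) / 2) t := by
      exact (hs.const_add (-a ^ 2)).div_const 2
    convert hS using 1
    have h2S : 2 * S t + a ^ 2 = Real.sqrt D := by
      simp only [S]; ring
    rw [h2S]
    have hST : S t * (S t + a ^ 2) = C₀ * Real.exp (8 * t) := hkey t
    field_simp
    linear_combination (32 * Real.sqrt D) * hST + (1 - 8 * Real.sqrt (a ^ 4 + 4 * C₀ * Real.exp (8 * t))) * hsq2 t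
  · have hexp : Tendsto (fun t => Real.exp (8 * t)) atBot (nhds 0) :=
      Real.tendsto_exp_atBot.comp (tendsto_id.const_mul_atBot (by norm_num))
    have h1 : Tendsto (fun t => a ^ 4 + 4 * C₀ * Real.exp (8 * t)) atBot (nhds (a ^ 4)) := by
      have := (hexp.const_mul (4 * C₀)).const_add (a ^ 4)
      simpa using this
    have h2 : Tendsto S atBot (nhds ((-a ^ 2 + Real.sqrt (a ^ 4)) / 2)) := by
      exact ((Real.continuous_sqrt.continuousAt.tendsto.comp h1).const_add (-a ^ 2)).div_const 2
    have : Real.sqrt (a ^ 4) = a ^ 2 := by rw [ha4, Real.sqrt_sq ha2.le]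
    rw [this] at h2
    simpa using h2
  · have hexp : Tendsto (fun t => Real.exp (8 * t)) atTop atTop :=
      Real.tendsto_exp_atTop.comp (tendsto_id.const_mul_atTop (by norm_num))
    have h1 : Tendsto (fun t => a ^ 4 + 4 * C₀ * Real.exp (8 * t)) atTop atTop := by
      exact tendsto_atTop_add_const_left _ _ (hexp.const_mul_atTop (by positivity))
    have hsqrtTop : Tendsto Real.sqrt atTop atTop := by
      rw [show Real.sqrt = fun x => x ^ ((1:ℝ)/2) from funext fun x => Real.sqrt_eq_rpow x]
      exact tendsto_rpow_atTop (by norm_num)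
    have h2 : Tendsto (fun t => Real.sqrt (a ^ 4 + 4 * C₀ * Real.exp (8 * t))) atTop atTop :=
      hsqrtTop.comp h1
    exact (tendsto_atTop_add_const_left _ _ h2).atTop_div_const (by norm_num)
end

section
/- Let N be a d×d complex matrix and η ∈ ℂ with η ≠ 0 such that N³ = η³·I. Let ω = exp(2πi/3), and define g₀(η) = (e^η + e^{ωη} + e^{ω²η})/3, g₁(η) = (e^η + ω²e^{ωη} + ωe^{ω²η})/3, g₂(η) = (e^η + ωe^{ωη} + ω²e^{ω²η})/3. Then exp(N) = g₀(η)·I + (g₁(η)/η)·N + (g₂(η)/η²)·N². -/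
open Matrix
open scoped Nat

lemma tsum_split3 {E : Type*} [NormedAddCommGroup E] [CompleteSpace E] (f : ℕ → E)
    (hf : Summable f) :
    ∑' n, f n = ∑' j : ℕ, (f (3*j) + f (3*j+1) + f (3*j+2)) := by
  have h := (Nat.divModEquiv 3).symm.tsum_eq f
  have hs : Summable fun c : ℕ × Fin 3 => f ((Nat.divModEquiv 3).symm c) :=
    hf.comp_injective (Equiv.injective _)
  rw [← h, hs.tsum_prod]
  congr 1; funext j
  rw [tsum_fintype]
  simp [Nat.divModEquiv, Fin.sum_univ_three, mul_comm, add_assoc]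

lemma omega_cube : Complex.exp (2 * Real.pi * Complex.I / 3) ^ 3 = 1 := by
  rw [← Complex.exp_nat_mul]
  norm_num
  rw [show (3:ℂ) * (2 * Real.pi * Complex.I / 3) = 2 * Real.pi * Complex.I by ring,
    Complex.exp_two_pi_mul_I]

lemma omega_ne_one : Complex.exp (2 * Real.pi * Complex.I / 3) ≠ 1 := by
  intro h
  rw [Complex.exp_eq_one_iff] at h
  obtain ⟨n, hn⟩ := h
  have hpi : (Real.pi : ℂ) ≠ 0 := by exact_mod_cast Real.pi_ne_zero
  have h3 : (1 : ℂ) = 3 * n := by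
    have h2 : 2 * (Real.pi:ℂ) * Complex.I * 1 = 2 * Real.pi * Complex.I * (3 * n) := by
      linear_combination 3 * hn
    exact mul_left_cancel₀ (by simp [hpi, Complex.I_ne_zero] :
      (2 * (Real.pi:ℂ) * Complex.I) ≠ 0) h2
  have : (1 : ℤ) = 3 * n := by exact_mod_cast h3
  omega

lemma omega_sum : 1 + Complex.exp (2 * Real.pi * Complex.I / 3)
    + Complex.exp (2 * Real.pi * Complex.I / 3) ^ 2 = 0 := by
  set ω := Complex.exp (2 * Real.pi * Complex.I / 3) with hω
  have h1 : (ω - 1) * (1 + ω + ω ^ 2) = 0 := by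
    linear_combination omega_cube
  rcases mul_eq_zero.1 h1 with h | h
  · exact absurd (sub_eq_zero.1 h) omega_ne_one
  · exact h

/-- The `i`-th mod-3 component of the exponential series at `η`. -/
noncomputable def S3 (η : ℂ) (i : ℕ) : ℂ := ∑' j : ℕ, η ^ (3*j+i) / ((3*j+i) ! : ℂ)

lemma S3_summable (η : ℂ) (i : ℕ) :
    Summable fun j : ℕ => η ^ (3*j+i) / ((3*j+i) ! : ℂ) :=
  (NormedSpace.expSeries_div_summable η).comp_injective (fun a b h => by omega)

lemma exp_eq_S3 (η c : ℂ) (hc : c ^ 3 = 1) :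
    Complex.exp (c * η) = S3 η 0 + c * S3 η 1 + c ^ 2 * S3 η 2 := by
  have hsum : Summable fun n : ℕ => (c*η) ^ n / (n ! : ℂ) :=
    NormedSpace.expSeries_div_summable _
  rw [Complex.exp_eq_exp_ℂ,
    congrFun (NormedSpace.exp_eq_tsum_div (𝔸 := ℂ)) (c * η), tsum_split3 _ hsum]
  have key : ∀ j : ℕ,
      (c*η)^(3*j) / ((3*j) ! : ℂ) + (c*η)^(3*j+1) / ((3*j+1) ! : ℂ)
        + (c*η)^(3*j+2) / ((3*j+2) ! : ℂ)
      = η^(3*j+0) / ((3*j+0) ! : ℂ) + c * (η^(3*j+1) / ((3*j+1) ! : ℂ))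
        + c^2 * (η^(3*j+2) / ((3*j+2) ! : ℂ)) := by
    intro j
    have h1 : c ^ (3*j) = 1 := by rw [pow_mul, hc, one_pow]
    have h2 : c ^ (3*j+1) = c := by rw [pow_add, h1, one_mul, pow_one]
    have h3 : c ^ (3*j+2) = c ^ 2 := by rw [pow_add, h1, one_mul]
    rw [mul_pow, mul_pow, mul_pow, h1, h2, h3]
    ring_nf
  simp only [key]
  rw [Summable.tsum_add ((S3_summable η 0).add ((S3_summable η 1).mul_left c))
      ((S3_summable η 2).mul_left (c^2)),
    Summable.tsum_add (S3_summable η 0) ((S3_summable η 1).mul_left c),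
    tsum_mul_left, tsum_mul_left]
  rfl

lemma exp_matrix_S3 (d : ℕ) (N : Matrix (Fin d) (Fin d) ℂ) (η : ℂ) (hη : η ≠ 0)
    (hN : N ^ 3 = η ^ 3 • (1 : Matrix (Fin d) (Fin d) ℂ)) :
    NormedSpace.exp N = (S3 η 0) • (1 : Matrix (Fin d) (Fin d) ℂ)
      + (S3 η 1 / η) • N + (S3 η 2 / η ^ 2) • N ^ 2 := by
  letI : SeminormedRing (Matrix (Fin d) (Fin d) ℂ) := Matrix.linftyOpSemiNormedRing
  letI : NormedRing (Matrix (Fin d) (Fin d) ℂ) := Matrix.linftyOpNormedRing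
  letI : NormedAlgebra ℂ (Matrix (Fin d) (Fin d) ℂ) := Matrix.linftyOpNormedAlgebra
  have hfac : ∀ m : ℕ, ((m ! : ℂ)) ≠ 0 := fun m =>
    Nat.cast_ne_zero.2 (Nat.factorial_ne_zero m)
  -- coefficient series
  have hcoef : ∀ i : ℕ, S3 η i / η ^ i = ∑' j : ℕ, (((3*j+i) ! : ℂ))⁻¹ * η ^ (3*j) := by
    intro i
    rw [S3, ← tsum_div_const]
    congr 1; funext j
    rw [pow_add]
    field_simp
  have hci : ∀ i : ℕ, Summable (fun j : ℕ => (((3*j+i) ! : ℂ))⁻¹ * η ^ (3*j)) := by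
    intro i
    refine ((S3_summable η i).div_const (η ^ i)).congr fun j => ?_
    rw [pow_add]
    field_simp
  -- powers of N
  have hpow : ∀ i j : ℕ, N ^ (3*j+i) = η ^ (3*j) • N ^ i := by
    intro i j
    rw [pow_add, pow_mul, hN, smul_pow, one_pow, pow_mul, smul_mul_assoc, one_mul]
  have h0 : NormedSpace.exp N = ∑' n : ℕ, ((n ! : ℂ))⁻¹ • N ^ n :=
    congrFun (NormedSpace.exp_eq_tsum ℂ) N
  have hsum : Summable (fun n : ℕ => ((n ! : ℂ))⁻¹ • N ^ n) :=
    NormedSpace.expSeries_summable' N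
  rw [h0]
  refine (tsum_split3 _ hsum).trans ?_
  have key : ∀ j : ℕ,
      (((3*j) ! : ℂ))⁻¹ • N ^ (3*j) + (((3*j+1) ! : ℂ))⁻¹ • N ^ (3*j+1)
        + (((3*j+2) ! : ℂ))⁻¹ • N ^ (3*j+2)
      = ((((3*j) ! : ℂ))⁻¹ * η ^ (3*j)) • (1 : Matrix (Fin d) (Fin d) ℂ)
        + ((((3*j+1) ! : ℂ))⁻¹ * η ^ (3*j)) • N
        + ((((3*j+2) ! : ℂ))⁻¹ * η ^ (3*j)) • N ^ 2 := by
    intro j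
    have e0 : N ^ (3*j) = η ^ (3*j) • (1 : Matrix (Fin d) (Fin d) ℂ) := by
      simpa using hpow 0 j
    rw [e0, hpow 1 j, hpow 2 j, pow_one, smul_smul, smul_smul, smul_smul]
  simp only [key]
  have hci0 : Summable (fun j : ℕ => (((3*j) ! : ℂ))⁻¹ * η ^ (3*j)) := by
    simpa using hci 0
  have k0 : (∑' j : ℕ, (((3*j) ! : ℂ))⁻¹ * η ^ (3*j)) = S3 η 0 := by
    have h := hcoef 0
    simp only [Nat.add_zero, pow_zero, div_one] at h
    exact h.symm
  have k1 : (∑' j : ℕ, (((3*j+1) ! : ℂ))⁻¹ * η ^ (3*j)) = S3 η 1 / η := by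
    have h := hcoef 1
    rw [pow_one] at h
    exact h.symm
  have k2 : (∑' j : ℕ, (((3*j+2) ! : ℂ))⁻¹ * η ^ (3*j)) = S3 η 2 / η ^ 2 := (hcoef 2).symm
  rw [Summable.tsum_add ((hci0.smul_const _).add ((hci 1).smul_const _)) ((hci 2).smul_const _),
    Summable.tsum_add (hci0.smul_const _) ((hci 1).smul_const _),
    Summable.tsum_smul_const hci0, Summable.tsum_smul_const (hci 1), Summable.tsum_smul_const (hci 2),
    k0, k1, k2]

/-- If `N³ = η³·I` with `η ≠ 0`, then
`exp(N) = g₀(η)·I + (g₁(η)/η)·N + (g₂(η)/η²)·N²`, where the `gᵢ` are the roots-of-unity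
filter components of the exponential with ω = e^{2πi/3}. -/
theorem exp_of_cube_scalar (d : ℕ) (N : Matrix (Fin d) (Fin d) ℂ) (η : ℂ) (hη : η ≠ 0)
    (hN : N ^ 3 = η ^ 3 • (1 : Matrix (Fin d) (Fin d) ℂ)) :
    let ω : ℂ := Complex.exp (2 * Real.pi * Complex.I / 3)
    let g₀ : ℂ := (Complex.exp η + Complex.exp (ω * η) + Complex.exp (ω ^ 2 * η)) / 3
    let g₁ : ℂ := (Complex.exp η + ω ^ 2 * Complex.exp (ω * η) + ω * Complex.exp (ω ^ 2 * η)) / 3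
    let g₂ : ℂ := (Complex.exp η + ω * Complex.exp (ω * η) + ω ^ 2 * Complex.exp (ω ^ 2 * η)) / 3
    NormedSpace.exp N = g₀ • (1 : Matrix (Fin d) (Fin d) ℂ) + (g₁ / η) • N + (g₂ / η ^ 2) • N ^ 2 := by
  intro ω g₀ g₁ g₂
  have hω3 : ω ^ 3 = 1 := omega_cube
  have hωs : 1 + ω + ω ^ 2 = 0 := omega_sum
  have h1 : Complex.exp η = S3 η 0 + S3 η 1 + S3 η 2 := by
    have h := exp_eq_S3 η 1 (one_pow 3)
    rw [one_mul] at h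
    simpa using h
  have hw : Complex.exp (ω * η) = S3 η 0 + ω * S3 η 1 + ω ^ 2 * S3 η 2 :=
    exp_eq_S3 η ω hω3
  have hw2 : Complex.exp (ω ^ 2 * η) = S3 η 0 + ω ^ 2 * S3 η 1 + ω * S3 η 2 := by
    have h := exp_eq_S3 η (ω ^ 2) (by rw [← pow_mul, mul_comm, pow_mul, hω3, one_pow])
    rw [h, show (ω ^ 2) ^ 2 = ω by linear_combination ω * hω3]
  have hg0 : g₀ = S3 η 0 := by
    show (Complex.exp η + Complex.exp (ω * η) + Complex.exp (ω ^ 2 * η)) / 3 = S3 η 0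
    rw [h1, hw, hw2]
    linear_combination ((S3 η 1 + S3 η 2)/3) * hωs
  have hg1 : g₁ = S3 η 1 := by
    show (Complex.exp η + ω ^ 2 * Complex.exp (ω * η) + ω * Complex.exp (ω ^ 2 * η)) / 3 = S3 η 1
    rw [h1, hw, hw2]
    linear_combination ((S3 η 0 + S3 η 2)/3) * hωs + ((2 * S3 η 1 + ω * S3 η 2)/3) * hω3
  have hg2 : g₂ = S3 η 2 := by
    show (Complex.exp η + ω * Complex.exp (ω * η) + ω ^ 2 * Complex.exp (ω ^ 2 * η)) / 3 = S3 η 2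
    rw [h1, hw, hw2]
    linear_combination ((S3 η 0 + S3 η 1)/3) * hωs + ((ω * S3 η 1 + 2 * S3 η 2)/3) * hω3
  rw [hg0, hg1, hg2]
  exact exp_matrix_S3 d N η hη hN
end

section
/- Let A and B be d×d complex matrices and ω ∈ ℂ such that B·A = ω·(A·B). Then B·exp(A) = exp(ω·A)·B. -/
open Matrix

/-- If `B·A = ω·(A·B)`, then `B·exp(A) = exp(ω·A)·B`. -/
theorem mul_exp_of_comm_rel (d : ℕ) (A B : Matrix (Fin d) (Fin d) ℂ) (ω : ℂ)
    (h : B * A = ω • (A * B)) :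
    B * NormedSpace.exp A = NormedSpace.exp (ω • A) * B := by
  letI : SeminormedRing (Matrix (Fin d) (Fin d) ℂ) := Matrix.linftyOpSemiNormedRing
  letI : NormedRing (Matrix (Fin d) (Fin d) ℂ) := Matrix.linftyOpNormedRing
  letI : NormedAlgebra ℂ (Matrix (Fin d) (Fin d) ℂ) := Matrix.linftyOpNormedAlgebra
  have key : ∀ n : ℕ, B * A ^ n = (ω • A) ^ n * B := by
    intro n
    induction n with
    | zero => simp
    | succ n ih =>
      calc B * A ^ (n + 1) = (B * A ^ n) * A := by rw [pow_succ, mul_assoc]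
        _ = (ω • A) ^ n * (B * A) := by rw [ih, mul_assoc]
        _ = (ω • A) ^ n * (ω • (A * B)) := by rw [h]
        _ = ((ω • A) ^ n * (ω • A)) * B := by
            simp only [mul_smul_comm, smul_mul_assoc, mul_assoc]
        _ = (ω • A) ^ (n + 1) * B := by rw [pow_succ]
  simp only [NormedSpace.exp_eq_tsum (𝕂 := ℂ)]
  have hs : Summable fun n : ℕ => (n.factorial : ℂ)⁻¹ • A ^ n :=
    NormedSpace.expSeries_summable' (𝕂 := ℂ) A
  have hs' : Summable fun n : ℕ => (n.factorial : ℂ)⁻¹ • (ω • A) ^ n :=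
    NormedSpace.expSeries_summable' (𝕂 := ℂ) (ω • A)
  rw [← hs.tsum_mul_left B, ← hs'.tsum_mul_right B]
  congr 1
  funext n
  rw [mul_smul_comm, smul_mul_assoc, key n]
end

section
/- Let A and B be d×d complex matrices, and let ω ∈ ℂ satisfy ω³ = 1 and ω ≠ 1 (so that 1 − ω² ≠ 0). Suppose B·A = ω·(A·B), and set μ = (1 − ω²)⁻¹. Then exp(μ·A)·B·exp(A)·exp(−μ·A) = B. (Equivalently, P = exp(−μ·A) satisfies P·B·P⁻¹ = B·exp(A), yielding the explicit change-of-basis matrix P(t) = exp(ω·N(t)) conjugating the regular representation matrix to the holonomy matrix in the ℤ₃ case.) -/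
open Matrix

open NormedSpace in
lemma exp_mul_comm_aux {d : ℕ} (x y B : Matrix (Fin d) (Fin d) ℂ)
    (hxy : x * B = B * y) :
    NormedSpace.exp x * B = B * NormedSpace.exp y := by
  letI : SeminormedRing (Matrix (Fin d) (Fin d) ℂ) := Matrix.linftyOpSemiNormedRing
  letI : NormedRing (Matrix (Fin d) (Fin d) ℂ) := Matrix.linftyOpNormedRing
  letI : NormedAlgebra ℂ (Matrix (Fin d) (Fin d) ℂ) := Matrix.linftyOpNormedAlgebra
  have hk : ∀ k : ℕ, x ^ k * B = B * y ^ k := by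
    intro k
    induction k with
    | zero => simp
    | succ n ih =>
      rw [pow_succ, pow_succ, mul_assoc, hxy, ← mul_assoc, ih, mul_assoc]
  simp only [exp_eq_tsum ℂ]
  have hsx : Summable (fun n : ℕ => (n.factorial⁻¹ : ℂ) • x ^ n) := expSeries_summable' (𝕂 := ℂ) x
  have hsy : Summable (fun n : ℕ => (n.factorial⁻¹ : ℂ) • y ^ n) := expSeries_summable' (𝕂 := ℂ) y
  rw [← hsx.tsum_mul_right B,
    ← hsy.tsum_mul_left B]
  congr 1
  ext n
  rw [smul_mul_assoc, hk, mul_smul_comm]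

/-- If `ω³ = 1`, `ω ≠ 1`, `B·A = ω·(A·B)` and `μ = (1 − ω²)⁻¹`, then
`exp(μA)·B·exp(A)·exp(−μA) = B`. -/
theorem change_of_basis_Z3 (d : ℕ) (A B : Matrix (Fin d) (Fin d) ℂ) (ω : ℂ)
    (hω3 : ω ^ 3 = 1) (hω1 : ω ≠ 1) (h : B * A = ω • (A * B)) :
    NormedSpace.exp ((1 - ω ^ 2)⁻¹ • A) * B * NormedSpace.exp A *
      NormedSpace.exp (-((1 - ω ^ 2)⁻¹ • A)) = B := by
  set μ : ℂ := (1 - ω ^ 2)⁻¹ with hμ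
  have hne : (1 : ℂ) - ω ^ 2 ≠ 0 := by
    intro hc
    have hw2 : ω ^ 2 = 1 := by linear_combination -hc
    have hw : ω = 1 := by
      have h3 := hω3
      rw [show (3 : ℕ) = 2 + 1 from rfl, pow_succ, hw2, one_mul] at h3
      exact h3
    exact hω1 hw
  have hAB : A * B = ω ^ 2 • (B * A) := by
    rw [h, smul_smul, show ω ^ 2 * ω = ω ^ 3 by ring, hω3, one_smul]
  have hxy : (μ • A) * B = B * ((ω ^ 2 * μ) • A) := by
    rw [smul_mul_assoc, hAB, smul_smul, mul_comm μ, mul_smul_comm]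
  have hexp := exp_mul_comm_aux (μ • A) ((ω ^ 2 * μ) • A) B hxy
  rw [hexp]
  have hc0 : ω ^ 2 * μ + 1 - μ = 0 := by
    rw [hμ]
    field_simp
    ring
  have hcomb : NormedSpace.exp ((ω ^ 2 * μ) • A) * (NormedSpace.exp A *
      NormedSpace.exp (-(μ • A))) = 1 := by
    have c1 : Commute ((ω ^ 2 * μ) • A) A := (Commute.refl A).smul_left _
    have c2 : Commute ((ω ^ 2 * μ) • A + A) (-(μ • A)) :=
      ((((Commute.refl A).smul_left _).smul_right μ).add_left
        ((Commute.refl A).smul_right μ)).neg_right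
    rw [← mul_assoc, ← Matrix.exp_add_of_commute _ _ c1,
      ← Matrix.exp_add_of_commute _ _ c2]
    have h3 : (ω ^ 2 * μ) • A + A + -(μ • A) = (ω ^ 2 * μ + 1 - μ) • A := by
      module
    rw [h3, hc0, zero_smul, NormedSpace.exp_zero]
  rw [mul_assoc, mul_assoc, hcomb, mul_one]
end

section
/- Let D, α, β be n×n complex matrices with D invertible, let ω ∈ ℂ with ω ≠ 0, and let v₁, v₂ ∈ ℂ. Suppose D⁻¹·α·D = ω·α, D⁻¹·β·D = ω⁻¹·β, and α·β = β·α. Define φ : ℤ → Matₙ(ℂ) by φ(k) = Dᵏ·exp((1 − ωᵏ)·v₁·α + (1 − ω⁻ᵏ)·v₂·β). Then φ(k + l) = φ(k)·φ(l) for all k, l ∈ ℤ. (This shows the holonomy assignment γ ↦ R(γ)·exp((v₁ − γ·v₁ coordinate)·α + (v₂ − γ·v₂ coordinate)·β) of the flat connection d + α dz₁ + β dz₂ is a group homomorphism in the cyclic case.) -/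
open Matrix

private lemma conj_zpow_aux (n : ℕ) (D A : Matrix (Fin n) (Fin n) ℂ)
    (hD : IsUnit D.det) (ω : ℂ) (hω : ω ≠ 0)
    (h : D⁻¹ * A * D = ω • A) : ∀ l : ℤ, D ^ (-l) * A * D ^ l = ω ^ l • A := by
  have hDl : D⁻¹ * D = 1 := nonsing_inv_mul D hD
  have hDr : D * D⁻¹ = 1 := mul_nonsing_inv D hD
  have h' : D * A * D⁻¹ = ω⁻¹ • A := by
    have h2 : D * (D⁻¹ * A * D) * D⁻¹ = D * (ω • A) * D⁻¹ := by rw [h]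
    have h3 : D * (D⁻¹ * A * D) * D⁻¹ = A := by
      rw [show D * (D⁻¹ * A * D) * D⁻¹ = (D * D⁻¹) * A * (D * D⁻¹) by noncomm_ring,
        hDr, one_mul, mul_one]
    have h4 : A = ω • (D * A * D⁻¹) := by
      conv_lhs => rw [← h3, h2]
      rw [mul_smul_comm, smul_mul_assoc]
    calc D * A * D⁻¹ = ω⁻¹ • (ω • (D * A * D⁻¹)) := by rw [inv_smul_smul₀ hω]
      _ = ω⁻¹ • A := by rw [← h4]
  intro l
  induction l using Int.induction_on with
  | zero => simp
  | succ z ih =>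
    have e1 : D ^ (-((z : ℤ) + 1)) = D ^ (-(z : ℤ)) * D⁻¹ := by
      rw [show -((z : ℤ) + 1) = -z + -1 by ring, Matrix.zpow_add hD, Matrix.zpow_neg_one]
    have e2 : D ^ ((z : ℤ) + 1) = D * D ^ (z : ℤ) := by
      rw [show (z : ℤ) + 1 = 1 + z by ring, Matrix.zpow_add hD, zpow_one]
    rw [e1, e2, show D ^ (-(z : ℤ)) * D⁻¹ * A * (D * D ^ (z : ℤ))
        = D ^ (-(z : ℤ)) * (D⁻¹ * A * D) * D ^ (z : ℤ) by
      simp only [mul_assoc], h, mul_smul_comm, smul_mul_assoc, ih, smul_smul]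
    congr 1
    rw [zpow_add_one₀ hω]
    ring
  | pred z ih =>
    have e1 : D ^ (-(-(z : ℤ) - 1)) = D * D ^ (-(-(z : ℤ))) := by
      rw [show -(-(z : ℤ) - 1) = 1 + -(-(z : ℤ)) by ring, Matrix.zpow_add hD, zpow_one]
    have e2 : D ^ (-(z : ℤ) - 1) = D ^ (-(z : ℤ)) * D⁻¹ := by
      rw [show -(z : ℤ) - 1 = -z + -1 by ring, Matrix.zpow_add hD, Matrix.zpow_neg_one]
    rw [e1, e2, show D * D ^ (-(-(z : ℤ))) * A * (D ^ (-(z : ℤ)) * D⁻¹)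
        = D * (D ^ (-(-(z : ℤ))) * A * D ^ (-(z : ℤ))) * D⁻¹ by
      simp only [mul_assoc], ih, mul_smul_comm, smul_mul_assoc, h', smul_smul]
    congr 1
    rw [← zpow_neg_one ω, ← zpow_add₀ hω]
    ring_nf

/-- In the cyclic case, the holonomy assignment
`φ(k) = Dᵏ·exp((1 − ωᵏ)·v₁·α + (1 − ω⁻ᵏ)·v₂·β)` of the flat connection
`d + α dz₁ + β dz₂` is a group homomorphism: `φ(k+l) = φ(k)·φ(l)`. -/
theorem holonomy_is_homomorphism (n : ℕ) (D α β : Matrix (Fin n) (Fin n) ℂ)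
    (hD : IsUnit D.det) (ω : ℂ) (hω : ω ≠ 0) (v₁ v₂ : ℂ)
    (hα : D⁻¹ * α * D = ω • α) (hβ : D⁻¹ * β * D = ω⁻¹ • β)
    (hcomm : α * β = β * α) :
    let φ : ℤ → Matrix (Fin n) (Fin n) ℂ := fun k =>
      D ^ k * NormedSpace.exp (((1 - ω ^ k) * v₁) • α + ((1 - ω ^ (-k)) * v₂) • β)
    ∀ k l : ℤ, φ (k + l) = φ k * φ l := by
  intro φ k l
  show D ^ (k + l) * NormedSpace.exp
      (((1 - ω ^ (k + l)) * v₁) • α + ((1 - ω ^ (-(k + l))) * v₂) • β)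
    = (D ^ k * NormedSpace.exp (((1 - ω ^ k) * v₁) • α + ((1 - ω ^ (-k)) * v₂) • β)) *
      (D ^ l * NormedSpace.exp (((1 - ω ^ l) * v₁) • α + ((1 - ω ^ (-l)) * v₂) • β))
  have hαconj := conj_zpow_aux n D α hD ω hω hα
  have hβconj := conj_zpow_aux n D β hD ω⁻¹ (inv_ne_zero hω) hβ
  have hDlpow : IsUnit (D ^ l).det := by exact hD.det_zpow l
  have hDlunit : IsUnit (D ^ l) := (Matrix.isUnit_iff_isUnit_det _).mpr hDlpow
  have hDlinv : (D ^ l)⁻¹ = D ^ (-l) := (Matrix.zpow_neg hD l).symm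
  set Mk : Matrix (Fin n) (Fin n) ℂ :=
    ((1 - ω ^ k) * v₁) • α + ((1 - ω ^ (-k)) * v₂) • β with hMk
  set Ml : Matrix (Fin n) (Fin n) ℂ :=
    ((1 - ω ^ l) * v₁) • α + ((1 - ω ^ (-l)) * v₂) • β with hMl
  set N : Matrix (Fin n) (Fin n) ℂ :=
    ((1 - ω ^ k) * v₁ * ω ^ l) • α + ((1 - ω ^ (-k)) * v₂ * ω ^ (-l)) • β with hN
  -- conjugation of α, β by D^l in the other direction
  have hc1 : D ^ l * α * D ^ (-l) = ω ^ (-l) • α := by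
    have := hαconj (-l); rwa [neg_neg] at this
  have hc2 : D ^ l * β * D ^ (-l) = (ω : ℂ) ^ l • β := by
    have := hβconj (-l); rw [neg_neg] at this
    rwa [_root_.inv_zpow, _root_.zpow_neg, inv_inv] at this
  have hωll : ω ^ l * ω ^ (-l) = 1 := by
    rw [← zpow_add₀ hω]; simp
  have hωll' : ω ^ (-l) * ω ^ l = 1 := by
    rw [← zpow_add₀ hω]; simp
  have hconjN : D ^ l * N * (D ^ l)⁻¹ = Mk := by
    rw [hDlinv, hN, hMk, mul_add, add_mul, mul_smul_comm, mul_smul_comm,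
      smul_mul_assoc, smul_mul_assoc, hc1, hc2, smul_smul, smul_smul]
    congr 2
    · rw [mul_assoc ((1 - ω ^ k) * v₁), hωll, mul_one]
    · rw [mul_assoc ((1 - ω ^ (-k)) * v₂), hωll', mul_one]
  have hexpMk : NormedSpace.exp Mk = D ^ l * NormedSpace.exp N * (D ^ l)⁻¹ := by
    rw [← hconjN, Matrix.exp_conj (D ^ l) N hDlunit]
  -- commutation
  have hαβ : Commute α β := hcomm
  have hcomN : Commute N Ml := by
    refine Commute.add_left ?_ ?_ <;> refine Commute.add_right ?_ ?_
    · exact ((Commute.refl α).smul_left _).smul_right _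
    · exact (hαβ.smul_left _).smul_right _
    · exact (hαβ.symm.smul_left _).smul_right _
    · exact ((Commute.refl β).smul_left _).smul_right _
  -- sum of the exponents
  have hsum : N + Ml = ((1 - ω ^ (k + l)) * v₁) • α + ((1 - ω ^ (-(k + l))) * v₂) • β := by
    rw [hN, hMl, add_add_add_comm, ← add_smul, ← add_smul]
    congr 2
    · rw [zpow_add₀ hω]; ring
    · rw [show -(k + l) = -k + -l by ring, zpow_add₀ hω]; ring
  rw [← hsum, Matrix.exp_add_of_commute N Ml hcomN, Matrix.zpow_add hD, hexpMk, hDlinv]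
  have hcancel : D ^ (-l) * D ^ l = 1 := by
    rw [← Matrix.zpow_add hD]; simp
  rw [show D ^ k * (D ^ l * NormedSpace.exp N * D ^ (-l)) * (D ^ l * NormedSpace.exp Ml)
      = D ^ k * (D ^ l * (NormedSpace.exp N * ((D ^ (-l) * D ^ l) * NormedSpace.exp Ml)))
      by noncomm_ring, hcancel, one_mul]
  noncomm_ring
end

section
/- Let a, r, s ∈ ℝ with r ≠ 0, s ≠ 0, r² + s² = a², and set K = r²/s². Let C₀ > 0 and define S(t) = (−a² + √(a⁴ + 4C₀e^{8t}))/2 and u(t) = 4·S(t)/(2·S(t) + a²). Define c₁(t) = ln(K·S(t)/(K+1)) and c₂(t) = c₃(t) = ln(S(t)/(K+1)). Then for all t ∈ ℝ: c₁′(t) = 2·(1 + r²·e^{−c₁(t)})·u(t), c₂′(t) = 2·(1 + s²·e^{−c₂(t)})·u(t), and c₃′(t) = 2·(4 − u(t)). (These are the flow equations for a gradient flow line emanating from a generic point ((r,0),(0,s)) of the sphere of S¹-fixed points of the A₁ (ℤ₂) ALE space.) -/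
lemma aux1 (P a2 K rr : ℝ) (hP : P ≠ 0) (hd : 2*P+a2 ≠ 0) (hK : K ≠ 0) (hK1 : K+1 ≠ 0)
    (h : rr*(K+1) = a2*K) :
    2*(1 + rr*(K*P/(K+1))⁻¹)*(4*P/(2*P+a2)) = (K*(8*P*(P+a2)/(2*P+a2))/(K+1))/(K*P/(K+1)) := by
  field_simp
  ring_nf
  linear_combination 8 * h

lemma aux2 (P a2 K ss : ℝ) (hP : P ≠ 0) (hd : 2*P+a2 ≠ 0) (hK1 : K+1 ≠ 0)
    (h : ss*(K+1) = a2) :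
    2*(1 + ss*(P/(K+1))⁻¹)*(4*P/(2*P+a2)) = ((8*P*(P+a2)/(2*P+a2))/(K+1))/(P/(K+1)) := by
  field_simp
  ring_nf
  linear_combination 8 * h

lemma aux3 (P a2 K : ℝ) (hP : P ≠ 0) (hd : 2*P+a2 ≠ 0) (hK1 : K+1 ≠ 0) :
    2*(4 - 4*P/(2*P+a2)) = ((8*P*(P+a2)/(2*P+a2))/(K+1))/(P/(K+1)) := by
  field_simp
  ring

/-- The flow equations for a gradient flow line emanating from a generic point
`((r,0),(0,s))` of the sphere of S¹-fixed points of the A₁ (ℤ₂) ALE space: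
with `K = r²/s²`, `S(t) = (−a² + √(a⁴ + 4C₀e^{8t}))/2`, `u(t) = 4S(t)/(2S(t)+a²)`,
`c₁(t) = ln(K·S(t)/(K+1))` and `c₂(t) = c₃(t) = ln(S(t)/(K+1))`, one has
`c₁′ = 2(1 + r²e^{−c₁})u`, `c₂′ = 2(1 + s²e^{−c₂})u`, and `c₃′ = 2(4 − u)`. -/
theorem generic_flow_equations_Z2 (a r s C₀ : ℝ) (hr : r ≠ 0) (hs : s ≠ 0)
    (hrs : r ^ 2 + s ^ 2 = a ^ 2) (hC : 0 < C₀) :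
    let K : ℝ := r ^ 2 / s ^ 2
    let S : ℝ → ℝ := fun t => (-a ^ 2 + Real.sqrt (a ^ 4 + 4 * C₀ * Real.exp (8 * t))) / 2
    let u : ℝ → ℝ := fun t => 4 * S t / (2 * S t + a ^ 2)
    let c₁ : ℝ → ℝ := fun t => Real.log (K * S t / (K + 1))
    let c₂ : ℝ → ℝ := fun t => Real.log (S t / (K + 1))
    let c₃ : ℝ → ℝ := c₂
    ∀ t : ℝ,
      HasDerivAt c₁ (2 * (1 + r ^ 2 * Real.exp (-c₁ t)) * u t) t ∧
      HasDerivAt c₂ (2 * (1 + s ^ 2 * Real.exp (-c₂ t)) * u t) t ∧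
      HasDerivAt c₃ (2 * (4 - u t)) t := by
  intro K S u c₁ c₂ c₃ t
  have hKval : K = r ^ 2 / s ^ 2 := rfl
  have hs2 : (0:ℝ) < s ^ 2 := by positivity
  have hr2 : (0:ℝ) < r ^ 2 := by positivity
  have ha2 : (0:ℝ) < a ^ 2 := by nlinarith
  have hK : (0:ℝ) < K := by rw [hKval]; positivity
  have hK1 : (0:ℝ) < K + 1 := by linarith
  have hE : (0:ℝ) < Real.exp (8 * t) := Real.exp_pos _
  have hD : (0:ℝ) < a ^ 4 + 4 * C₀ * Real.exp (8 * t) := by nlinarith [sq_nonneg (a^2)]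
  have hsq2 : Real.sqrt (a ^ 4 + 4 * C₀ * Real.exp (8 * t)) ^ 2
      = a ^ 4 + 4 * C₀ * Real.exp (8 * t) := Real.sq_sqrt hD.le
  have hsqnn : 0 ≤ Real.sqrt (a ^ 4 + 4 * C₀ * Real.exp (8 * t)) := Real.sqrt_nonneg _
  have hsqgt : a ^ 2 < Real.sqrt (a ^ 4 + 4 * C₀ * Real.exp (8 * t)) := by nlinarith
  have hSval : S t = (-a ^ 2 + Real.sqrt (a ^ 4 + 4 * C₀ * Real.exp (8 * t))) / 2 := rfl
  have hSpos : 0 < S t := by rw [hSval]; linarith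
  have hden : 2 * S t + a ^ 2 = Real.sqrt (a ^ 4 + 4 * C₀ * Real.exp (8 * t)) := by
    rw [hSval]; ring
  have hdpos : 0 < 2 * S t + a ^ 2 := by linarith
  -- derivative of S
  have hS' : HasDerivAt S (8 * S t * (S t + a ^ 2) / (2 * S t + a ^ 2)) t := by
    have h1 : HasDerivAt (fun t : ℝ => a ^ 4 + 4 * C₀ * Real.exp (8 * t))
        (4 * C₀ * (Real.exp (8 * t) * 8)) t := by
      have h := ((hasDerivAt_id t).const_mul (8:ℝ)).exp
      simp only [mul_one] at h
      exact ((h.const_mul (4 * C₀)).const_add (a ^ 4))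
    have h2 := ((h1.sqrt hD.ne').const_add (-a ^ 2)).div_const 2
    refine h2.congr_deriv ?_
    symm
    rw [hden, hSval]
    field_simp
    linear_combination hsq2
  have hKa1 : s ^ 2 * (K + 1) = a ^ 2 := by rw [hKval]; field_simp; linarith
  have hKa2 : r ^ 2 * (K + 1) = a ^ 2 * K := by
    rw [hKval]; field_simp; linear_combination hrs
  have huval : u t = 4 * S t / (2 * S t + a ^ 2) := rfl
  refine ⟨?_, ?_, ?_⟩
  · have hpos : 0 < K * S t / (K + 1) := by positivity
    have hl := ((hS'.const_mul K).div_const (K + 1)).log hpos.ne'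
    convert hl using 1
    have he : Real.exp (-c₁ t) = (K * S t / (K + 1))⁻¹ := by
      rw [show c₁ t = Real.log (K * S t / (K + 1)) from rfl,
        ← Real.log_inv, Real.exp_log (by positivity)]
    rw [he, huval]
    exact aux1 (S t) (a ^ 2) K (r ^ 2) hSpos.ne' hdpos.ne' hK.ne' hK1.ne' hKa2
  · have hpos : 0 < S t / (K + 1) := by positivity
    have hl := (hS'.div_const (K + 1)).log hpos.ne'
    convert hl using 1
    have he : Real.exp (-c₂ t) = (S t / (K + 1))⁻¹ := by
      rw [show c₂ t = Real.log (S t / (K + 1)) from rfl,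
        ← Real.log_inv, Real.exp_log (by positivity)]
    rw [he, huval]
    exact aux2 (S t) (a ^ 2) K (s ^ 2) hSpos.ne' hdpos.ne' hK1.ne' hKa1
  · have hpos : 0 < S t / (K + 1) := by positivity
    have hl := (hS'.div_const (K + 1)).log hpos.ne'
    convert hl using 1
    rw [huval]
    exact aux3 (S t) (a ^ 2) K hSpos.ne' hdpos.ne' hK1.ne'
end
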